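/- Let Ω ⊂ R^N be bounded, N ≥ 3, λ > 0, S > 0 the best Sobolev constant so that S‖v‖_{L^{2*}}² ≤ ‖∇v‖_{L²}² for all v ∈ H¹₀(Ω). Suppose (w_n) ⊂ H¹₀(Ω) satisfies ‖w_n‖_{H¹₀}² − λ‖w_n‖_{L^{2*}}^{2*} = o(1) and ‖w_n‖_{H¹₀}² ≤ c + o(1) with c < S^{N/2}/λ^{(N−2)/2}. Then w_n → 0 strongly in H¹₀(Ω). -/

import Mathlib

open Real MeasureTheory Filter Topology

theorem stmt_11 (N : ℕ) (hN : 3 ≤ N)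
    (Ω : Set (EuclideanSpace ℝ (Fin N))) (hΩb : Bornology.IsBounded Ω)
    (lam S c : ℝ) (hlam : 0 < lam) (hS : 0 < S)
    (w : ℕ → EuclideanSpace ℝ (Fin N) → ℝ) :
    let p : ℝ := 2 * N / ((N:ℝ) - 2)
    -- squared H¹₀ norm and 2*-power of the L^{2*} norm of w n
    let A : ℕ → ℝ := fun n => ∫ x in Ω, ‖gradient (w n) x‖ ^ 2
    let B : ℕ → ℝ := fun n => ∫ x in Ω, |w n x| ^ p
    -- S is the best Sobolev constant: S ‖v‖²_{L^{2*}} ≤ ‖∇v‖²_{L²}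
    (∀ n, S * B n ^ (2 / p) ≤ A n) →
    -- ‖w_n‖² − λ‖w_n‖_{2*}^{2*} = o(1)
    Tendsto (fun n => A n - lam * B n) atTop (𝓝 0) →
    -- ‖w_n‖² ≤ c + o(1)
    (∃ e : ℕ → ℝ, Tendsto e atTop (𝓝 0) ∧ ∀ n, A n ≤ c + e n) →
    c < S ^ ((N:ℝ) / 2) / lam ^ (((N:ℝ) - 2) / 2) →
    -- w_n → 0 strongly in H¹₀(Ω)
    Tendsto A atTop (𝓝 0) := by
  intro p A B hSob hPS hbd hc
  obtain ⟨e, he, hAe⟩ := hbd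
  set r : ℝ := (N : ℝ) with hr
  have hr3 : (3:ℝ) ≤ r := by rw [hr]; exact_mod_cast hN
  have hr2 : (0:ℝ) < r - 2 := by linarith
  have hrpos : (0:ℝ) < r := by linarith
  have hp : p = 2 * r / (r - 2) := rfl
  have hppos : 0 < p := by rw [hp]; positivity
  have hq : 0 < 2 / (r - 2) := by positivity
  set q : ℝ := 2 / (r - 2) with hqdef
  -- basic nonnegativity
  have hB : ∀ n, 0 ≤ B n := fun n =>
    integral_nonneg (fun x => Real.rpow_nonneg (abs_nonneg _) p)
  have hA : ∀ n, 0 ≤ A n := fun n =>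
    le_trans (mul_nonneg hS.le (Real.rpow_nonneg (hB n) _)) (hSob n)
  -- Sobolev rearranged: B n ≤ (A n / S) ^ (p/2)
  have hBle : ∀ n, B n ≤ (A n / S) ^ (p / 2) := by
    intro n
    have h1 : B n ^ (2 / p) ≤ A n / S := by
      rw [le_div_iff₀ hS, mul_comm]; exact hSob n
    have h2 : (B n ^ (2 / p)) ^ (p / 2) ≤ (A n / S) ^ (p / 2) :=
      Real.rpow_le_rpow (Real.rpow_nonneg (hB n) _) h1 (by positivity)
    rwa [← Real.rpow_mul (hB n), div_mul_div_comm, mul_comm,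
      div_self (by positivity), Real.rpow_one] at h2
  -- the critical level
  set RHS : ℝ := S ^ (r / 2) / lam ^ ((r - 2) / 2) with hRHS
  have hRHSpos : 0 < RHS := by
    apply div_pos <;> exact Real.rpow_pos_of_pos (by assumption) _
  set c'' : ℝ := (max c 0 + RHS) / 2 with hc''
  have hmax : max c 0 < RHS := max_lt hc hRHSpos
  have hc''pos : 0 < c'' := by
    have := le_max_right c 0; rw [hc'']; linarith
  have hc''lt : c'' < RHS := by rw [hc'']; linarith
  have hcc'' : c < c'' := by
    have := le_max_left c 0; rw [hc'']; linarith
  -- RHS ^ q = S ^ (1+q) / lam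
  have hSq : S ^ (r / (r - 2)) = S ^ ((1:ℝ) + q) := by
    congr 1
    rw [hqdef]; field_simp; ring
  have hRHSq : RHS ^ q = S ^ ((1:ℝ) + q) / lam := by
    rw [hRHS, Real.div_rpow (Real.rpow_pos_of_pos hS _).le (Real.rpow_pos_of_pos hlam _).le,
      ← Real.rpow_mul hS.le, ← Real.rpow_mul hlam.le]
    have h1 : r / 2 * q = 1 + q := by rw [hqdef]; field_simp; ring
    have h2 : (r - 2) / 2 * q = 1 := by rw [hqdef]; field_simp
    rw [h1, h2, Real.rpow_one]
  set θ : ℝ := lam * c'' ^ q / S ^ ((1:ℝ) + q) with hθ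
  have hθpos : 0 < θ := by
    apply div_pos (mul_pos hlam (Real.rpow_pos_of_pos hc''pos _))
      (Real.rpow_pos_of_pos hS _)
  have hθlt : θ < 1 := by
    rw [hθ, div_lt_one (Real.rpow_pos_of_pos hS _)]
    have h1 : c'' ^ q < RHS ^ q :=
      Real.rpow_lt_rpow hc''pos.le hc''lt hq
    rw [hRHSq] at h1
    calc lam * c'' ^ q < lam * (S ^ ((1:ℝ) + q) / lam) :=
          (mul_lt_mul_iff_right₀ hlam).2 h1
      _ = S ^ ((1:ℝ) + q) := by field_simp
  -- eventually A n ≤ c''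
  have hAc'' : ∀ᶠ n in atTop, A n ≤ c'' := by
    have : ∀ᶠ n in atTop, e n < c'' - c :=
      he.eventually (eventually_lt_nhds (by linarith))
    filter_upwards [this] with n hn
    have := hAe n; linarith
  -- key estimate: eventually lam * B n ≤ θ * A n
  have hkey : ∀ᶠ n in atTop, lam * B n ≤ θ * A n := by
    filter_upwards [hAc''] with n hn
    have hp2 : p / 2 = 1 + q := by
      rw [hp, hqdef]; field_simp; ring
    have h1 : lam * B n ≤ lam * (A n / S) ^ (p / 2) :=
      (mul_le_mul_iff_right₀ hlam).2 (hBle n)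
    have h2 : (A n / S) ^ (p / 2) = A n * A n ^ q / S ^ ((1:ℝ) + q) := by
      rw [hp2, Real.div_rpow (hA n) hS.le,
        Real.rpow_add' (hA n) (by positivity), Real.rpow_one]
    have h3 : A n ^ q ≤ c'' ^ q := Real.rpow_le_rpow (hA n) hn hq.le
    calc lam * B n ≤ lam * (A n * A n ^ q / S ^ ((1:ℝ) + q)) := by rw [← h2]; exact h1
      _ ≤ lam * (A n * c'' ^ q / S ^ ((1:ℝ) + q)) := by
          gcongr
      _ = θ * A n := by rw [hθ]; ring
  -- squeeze
  have hsq : Tendsto (fun n => (1 - θ) * A n) atTop (𝓝 0) := by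
    apply squeeze_zero' (g := fun n => A n - lam * B n)
    · filter_upwards with n using mul_nonneg (by linarith) (hA n)
    · filter_upwards [hkey] with n hn; nlinarith [hA n]
    · exact hPS
  have h1θ : (1 - θ) ≠ 0 := by linarith
  have := hsq.const_mul (1 - θ)⁻¹
  rw [mul_zero] at this
  convert this using 2 with n
  field_simp
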